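/- In the braided Hopf algebra $R(\mathcal{D})$ of type $A_n$ (the quotient of the free algebra on $x_1, \dots, x_n$ by the quantum Serre relations, with braiding given by a Cartan datum with $q_{ii} = q$, $q_{ij} q_{ji} = q^{-1}$ for $|i-j| = 1$, and $q_{ij} q_{ji} = 1$ for $|i-j| \geq 2$), the reverse root vector satisfies, for all $1 \leq i < j \leq n+1$: $x_{ji} = (-q)^{j-i-1} \big(\prod_{i \leq k < l < j} q_{lk}\big) \sum_{(i_1, \dots, i_r) \in I_{ij}} (q^{-1} - 1)^{r-2}\, x_{i_1 i_2} x_{i_2 i_3} \cdots x_{i_{r-1} i_r}$, where $I_{ij}$ is the set of chains $i = i_1 < \cdots < i_r = j$, $r \geq 2$. -/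

import Mathlib

/-- A chain `(i_1, …, i_r) ∈ I_{ij}` is encoded by the finite set `S ⊆ (i, j)` of its
interior entries. -/
def chainList (i j : ℕ) (S : Finset ℕ) : List ℕ := i :: (S.sort (· ≤ ·) ++ [j])

/-- `pairProd f [a_1, …, a_r] = f a_1 a_2 * f a_2 a_3 * ⋯ * f a_{r-1} a_r`. -/
def pairProd {M : Type*} [Monoid M] (f : ℕ → ℕ → M) : List ℕ → M
  | [] => 1
  | [_] => 1
  | a :: b :: t => f a b * pairProd f (b :: t)

/-- The root vector `x_{il}`: `x_{i,i+1} = x_i` and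
`x_{il} = [x_i, x_{i+1,l}]_c = x_i x_{i+1,l} - (q_{i,i+1} ⋯ q_{i,l-1}) • x_{i+1,l} x_i`. -/
def rootVec {k A : Type*} [CommRing k] [Ring A] [Algebra k A]
    (x : ℕ → A) (Q : ℕ → ℕ → k) : ℕ → ℕ → A
  | i, l =>
    if l ≤ i + 1 then x i
    else x i * rootVec x Q (i + 1) l
      - (∏ p ∈ Finset.Ioo i l, Q i p) • (rootVec x Q (i + 1) l * x i)
  termination_by i l => l - i
  decreasing_by all_goals omega

/-- The reverse root vector `x_{ji}`: `x_{i+1,i} = x_i` and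
`x_{ji} = [x_{j-1}, x_{j-1,i}]_c`. -/
def revRootVec {k A : Type*} [CommRing k] [Ring A] [Algebra k A]
    (x : ℕ → A) (Q : ℕ → ℕ → k) : ℕ → ℕ → A
  | j, i =>
    if j ≤ i + 1 then x i
    else x (j - 1) * revRootVec x Q (j - 1) i
      - (∏ p ∈ Finset.Ico i (j - 1), Q (j - 1) p) • (revRootVec x Q (j - 1) i * x (j - 1))
  termination_by j i => j - i
  decreasing_by all_goals omega

section Helpers

variable {k A : Type*} [CommRing k] [Ring A] [Algebra k A]

lemma rootVec_base (x : ℕ → A) (Q : ℕ → ℕ → k) {i l : ℕ} (h : l ≤ i + 1) :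
    rootVec x Q i l = x i := by
  rw [rootVec, if_pos h]

lemma rootVec_step (x : ℕ → A) (Q : ℕ → ℕ → k) {i l : ℕ} (h : i + 1 < l) :
    rootVec x Q i l = x i * rootVec x Q (i + 1) l
      - (∏ p ∈ Finset.Ioo i l, Q i p) • (rootVec x Q (i + 1) l * x i) := by
  rw [rootVec, if_neg (by omega)]

lemma pairProd_snoc {M : Type*} [Monoid M] (f : ℕ → ℕ → M) :
    ∀ (L : List ℕ) (a b : ℕ), pairProd f ((a :: L) ++ [b])
      = pairProd f (a :: L) * f ((a :: L).getLast (by simp)) b := by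
  intro L
  induction L with
  | nil => intro a b; simp [pairProd]
  | cons c L ih =>
      intro a b
      show pairProd f (a :: c :: (L ++ [b])) = _
      rw [pairProd]
      show f a c * pairProd f ((c :: L) ++ [b]) = _
      rw [ih c b, ← mul_assoc, List.getLast_cons (List.cons_ne_nil _ _)]
      rfl

lemma sort_insert_max {S : Finset ℕ} {j : ℕ} (h : ∀ a ∈ S, a < j) :
    (insert j S).sort (· ≤ ·) = S.sort (· ≤ ·) ++ [j] := by
  have hj : j ∉ S := fun hm => absurd (h j hm) (lt_irrefl j)
  have hnd : (S.sort (· ≤ ·) ++ [j]).Nodup := by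
    rw [List.nodup_append]
    refine ⟨Finset.sort_nodup _ _, List.nodup_singleton j, ?_⟩
    intro a ha b hb
    simp only [List.mem_singleton] at hb
    subst hb
    exact ne_of_lt (h a ((Finset.mem_sort (· ≤ ·)).1 ha))
  have hfs : (S.sort (· ≤ ·) ++ [j]).toFinset = insert j S := by
    ext a; simp [or_comm]
  have hso : (S.sort (· ≤ ·) ++ [j]).Pairwise (· ≤ ·) := by
    rw [List.pairwise_append]
    refine ⟨Finset.pairwise_sort _ _, List.pairwise_singleton _ j, ?_⟩
    intro a ha b hb
    simp only [List.mem_singleton] at hb; subst hb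
    exact le_of_lt (h a ((Finset.mem_sort (· ≤ ·)).1 ha))
  rw [← hfs]
  exact (List.toFinset_sort (· ≤ ·) hnd).2 hso

lemma prod_Ioo_succ_top' {a b : ℕ} (h : a < b) (f : ℕ → k) :
    ∏ p ∈ Finset.Ioo a (b+1), f p = (∏ p ∈ Finset.Ioo a b, f p) * f b := by
  rw [← Finset.Ico_add_one_left_eq_Ioo, ← Finset.Ico_add_one_left_eq_Ioo, Finset.prod_Ico_succ_top (show a + 1 ≤ b from h)]

lemma conjMul (u v w : A) (α β : k) (h1 : u * v = α • (v * u)) (h2 : u * w = β • (w * u)) :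
    u * (v * w) = (α * β) • (v * w * u) := by
  rw [← mul_assoc, h1, smul_mul_assoc, mul_assoc, h2, mul_smul_comm, smul_smul, mul_assoc]

lemma conjSub (u v w : A) (α β γ : k) (h1 : u * v = α • (v * u)) (h2 : u * w = β • (w * u)) :
    u * (v * w - γ • (w * v)) = (α * β) • ((v * w - γ • (w * v)) * u) := by
  rw [mul_sub, conjMul u v w α β h1 h2, mul_smul_comm, conjMul u w v β α h2 h1,
    sub_mul, smul_mul_assoc, smul_sub, smul_smul, smul_smul]
  ring_nf

lemma chain_head_le_getLast : ∀ (L : List ℕ) (b : ℕ), ((b :: L).IsChain (· < ·)) →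
    b ≤ (b :: L).getLast (List.cons_ne_nil _ _) := by
  intro L
  induction L with
  | nil => intro b _; simp
  | cons c L ih =>
      intro b hch
      rw [List.getLast_cons (List.cons_ne_nil _ _)]
      have h1 : b < c := (List.isChain_cons_cons.1 hch).1
      exact le_trans (le_of_lt h1) (ih c (List.isChain_cons_cons.1 hch).2)

lemma pairProd_cons₂ {M : Type*} [Monoid M] (f : ℕ → ℕ → M) (a b : ℕ) (t : List ℕ) :
    pairProd f (a :: b :: t) = f a b * pairProd f (b :: t) := rfl

lemma xcomm_rootVec (n : ℕ) (Q : ℕ → ℕ → k) (x : ℕ → A)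
    (hS2 : ∀ a b, 1 ≤ a → a ≤ n → 1 ≤ b → b ≤ n → (a + 2 ≤ b ∨ b + 2 ≤ a) →
      x a * x b - Q a b • (x b * x a) = 0) :
    ∀ (d a t : ℕ), 1 ≤ a → a + d + 1 < t → t ≤ n →
      x t * rootVec x Q a (a + d + 1)
        = (∏ p ∈ Finset.Ico a (a + d + 1), Q t p) • (rootVec x Q a (a + d + 1) * x t) := by
  intro d
  induction d with
  | zero =>
      intro a t ha hat htn
      rw [show a + 0 + 1 = a + 1 from by omega]
      rw [rootVec_base x Q (le_refl _), Nat.Ico_succ_singleton, Finset.prod_singleton]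
      have := hS2 t a (by omega) htn ha (by omega) (Or.inr (by omega))
      exact sub_eq_zero.1 this
  | succ d ih =>
      intro a t ha hat htn
      rw [show a + (d + 1) + 1 = a + 1 + d + 1 from by omega] at *
      rw [rootVec_step x Q (show a + 1 < a + 1 + d + 1 from by omega)]
      have h1 : x t * x a = Q t a • (x a * x t) :=
        sub_eq_zero.1 (hS2 t a (by omega) htn ha (by omega) (Or.inr (by omega)))
      have h2 := ih (a + 1) t (by omega) (by omega) htn
      rw [Finset.prod_eq_prod_Ico_succ_bot (show a < a + 1 + d + 1 from by omega)]
      exact conjSub _ _ _ _ _ _ h1 h2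

lemma xcomm_chain (n : ℕ) (Q : ℕ → ℕ → k) (x : ℕ → A)
    (hS2 : ∀ a b, 1 ≤ a → a ≤ n → 1 ≤ b → b ≤ n → (a + 2 ≤ b ∨ b + 2 ≤ a) →
      x a * x b - Q a b • (x b * x a) = 0)
    (t : ℕ) (htn : t ≤ n) :
    ∀ (L : List ℕ) (a : ℕ), ((a :: L).IsChain (· < ·)) → 1 ≤ a → (∀ b ∈ a :: L, b < t) →
      x t * pairProd (rootVec x Q) (a :: L)
        = (∏ p ∈ Finset.Ico a ((a :: L).getLast (List.cons_ne_nil _ _)), Q t p) •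
            (pairProd (rootVec x Q) (a :: L) * x t) := by
  intro L
  induction L with
  | nil =>
      intro a _ _ _
      show x t * 1 = (∏ p ∈ Finset.Ico a a, Q t p) • (1 * x t)
      simp
  | cons b L ih =>
      intro a hch ha hb
      have hab : a < b := (List.isChain_cons_cons.1 hch).1
      have hbt : b < t := hb b (by simp)
      have h1 : x t * rootVec x Q a b
          = (∏ p ∈ Finset.Ico a b, Q t p) • (rootVec x Q a b * x t) := by
        have := xcomm_rootVec n Q x hS2 (b - a - 1) a t ha (by omega) htn
        rw [show a + (b - a - 1) + 1 = b from by omega] at this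
        exact this
      have h2 := ih b (List.isChain_cons_cons.1 hch).2 (by omega) (fun c hc => hb c (by simp [hc]))
      rw [pairProd_cons₂, List.getLast_cons (List.cons_ne_nil _ _),
        ← Finset.prod_Ico_consecutive (fun p => Q t p) (le_of_lt hab)
          (chain_head_le_getLast L b (List.isChain_cons_cons.1 hch).2)]
      exact conjMul _ _ _ _ _ h1 h2

lemma rootVec_snoc (n : ℕ) (Q : ℕ → ℕ → k) (x : ℕ → A)
    (hS2 : ∀ a b, 1 ≤ a → a ≤ n → 1 ≤ b → b ≤ n → (a + 2 ≤ b ∨ b + 2 ≤ a) →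
      x a * x b - Q a b • (x b * x a) = 0) :
    ∀ (d a : ℕ), 1 ≤ a → a + d + 2 ≤ n + 1 →
      rootVec x Q a (a + d + 2)
        = rootVec x Q a (a + d + 1) * x (a + d + 1)
          - (∏ p ∈ Finset.Ico a (a + d + 1), Q p (a + d + 1)) •
              (x (a + d + 1) * rootVec x Q a (a + d + 1)) := by
  intro d
  induction d with
  | zero =>
      intro a ha han
      rw [show a + 0 + 2 = a + 1 + 1 from by omega, show a + 0 + 1 = a + 1 from by omega]
      rw [rootVec_step x Q (show a + 1 < a + 1 + 1 from by omega),
        rootVec_base x Q (show a + 1 + 1 ≤ (a + 1) + 1 from le_refl _),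
        rootVec_base x Q (show a + 1 ≤ a + 1 from le_refl _),
        show Finset.Ioo a (a + 1 + 1) = {a + 1} from by ext p; simp; omega,
        Nat.Ico_succ_singleton, Finset.prod_singleton, Finset.prod_singleton]
  | succ d ih =>
      intro a ha han
      rw [show a + (d + 1) + 2 = a + 1 + d + 2 from by omega,
        show a + (d + 1) + 1 = a + 1 + d + 1 from by omega] at *
      have hW : a + 2 ≤ a + 1 + d + 1 := by omega
      have hWn : a + 1 + d + 1 ≤ n := by omega
      rw [rootVec_step x Q (show a + 1 < a + 1 + d + 2 from by omega),
        ih (a + 1) (by omega) (by omega),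
        rootVec_step x Q (show a + 1 < a + 1 + d + 1 from by omega),
        show a + 1 + d + 2 = (a + 1 + d + 1) + 1 from by omega,
        prod_Ioo_succ_top' (show a < a + 1 + d + 1 from by omega),
        Finset.prod_eq_prod_Ico_succ_bot (show a < a + 1 + d + 1 from by omega)
          (fun p => Q p (a + 1 + d + 1))]
      have h1 : x a * x (a + 1 + d + 1) = Q a (a + 1 + d + 1) • (x (a + 1 + d + 1) * x a) :=
        sub_eq_zero.1 (hS2 a (a + 1 + d + 1) ha (by omega) (by omega) hWn (Or.inl hW))
      have h1w : ∀ y : A, x a * (x (a + 1 + d + 1) * y)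
          = Q a (a + 1 + d + 1) • (x (a + 1 + d + 1) * (x a * y)) := by
        intro y; rw [← mul_assoc, h1, smul_mul_assoc, mul_assoc]
      simp only [mul_sub, sub_mul, smul_mul_assoc, mul_smul_comm, smul_smul, mul_assoc, smul_sub]
      rw [h1w (rootVec x Q (a + 1) (a + 1 + d + 1)), h1]
      simp only [mul_smul_comm, smul_smul]
      match_scalars <;> ring

section FieldPart
variable {k' A' : Type*} [Field k'] [Ring A'] [Algebra k' A']

lemma prod_QQ (n : ℕ) (q : k') (Q : ℕ → ℕ → k')
    (hQ1 : ∀ a b, 1 ≤ a → a ≤ n → 1 ≤ b → b ≤ n → (a + 1 = b ∨ b + 1 = a) →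
      Q a b * Q b a = q⁻¹)
    (hQ2 : ∀ a b, 1 ≤ a → a ≤ n → 1 ≤ b → b ≤ n → (a + 2 ≤ b ∨ b + 2 ≤ a) →
      Q a b * Q b a = 1)
    (m j : ℕ) (h1 : 1 ≤ m) (hmj : m < j) (hjn : j ≤ n) :
    ∏ p ∈ Finset.Ico m j, (Q j p * Q p j) = q⁻¹ := by
  obtain ⟨t, rfl⟩ : ∃ t, j = t + 1 := ⟨j - 1, by omega⟩
  rw [Finset.prod_Ico_succ_top (show m ≤ t from by omega)]
  have h2 : ∏ p ∈ Finset.Ico m t, (Q (t + 1) p * Q p (t + 1)) = 1 := by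
    apply Finset.prod_eq_one
    intro p hp
    rw [Finset.mem_Ico] at hp
    exact hQ2 (t + 1) p (by omega) hjn (by omega) (by omega) (Or.inr (by omega))
  rw [h2, one_mul]
  exact hQ1 (t + 1) t (by omega) hjn (by omega) (by omega) (Or.inr rfl)

lemma chainKey (n : ℕ) (q : k') (hq0 : q ≠ 0) (Q : ℕ → ℕ → k') (x : ℕ → A')
    (hQ1 : ∀ a b, 1 ≤ a → a ≤ n → 1 ≤ b → b ≤ n → (a + 1 = b ∨ b + 1 = a) →
      Q a b * Q b a = q⁻¹)
    (hQ2 : ∀ a b, 1 ≤ a → a ≤ n → 1 ≤ b → b ≤ n → (a + 2 ≤ b ∨ b + 2 ≤ a) →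
      Q a b * Q b a = 1)
    (hS2 : ∀ a b, 1 ≤ a → a ≤ n → 1 ≤ b → b ≤ n → (a + 2 ≤ b ∨ b + 2 ≤ a) →
      x a * x b - Q a b • (x b * x a) = 0)
    (i j : ℕ) (S : Finset ℕ) (hi : 1 ≤ i) (hij : i < j) (hjn : j ≤ n)
    (hS : S ⊆ Finset.Ioo i j) :
    x j * pairProd (rootVec x Q) (chainList i j S)
      = (q * ∏ p ∈ Finset.Ico i j, Q j p) •
          (pairProd (rootVec x Q) (chainList i j S) * x j
            - pairProd (rootVec x Q) (chainList i (j + 1) S)) := by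
  have hmem : ∀ b ∈ S.sort (· ≤ ·), i < b ∧ b < j := by
    intro b hb
    have := hS ((Finset.mem_sort _).1 hb)
    simpa [Finset.mem_Ioo] using this
  have hch : (i :: S.sort (· ≤ ·)).IsChain (· < ·) := by
    rw [List.isChain_iff_pairwise]
    exact List.pairwise_cons.2 ⟨fun b hb => (hmem b hb).1, List.sortedLT_iff_pairwise.1 (Finset.sortedLT_sort S)⟩
  have hm_mem : (i :: S.sort (· ≤ ·)).getLast (List.cons_ne_nil _ _) ∈ i :: S.sort (· ≤ ·) :=
    List.getLast_mem _
  have him : i ≤ (i :: S.sort (· ≤ ·)).getLast (List.cons_ne_nil _ _) :=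
    chain_head_le_getLast _ i hch
  have hmj : (i :: S.sort (· ≤ ·)).getLast (List.cons_ne_nil _ _) < j := by
    rcases List.mem_cons.1 hm_mem with h | h
    · omega
    · exact (hmem _ h).2
  set m := (i :: S.sort (· ≤ ·)).getLast (List.cons_ne_nil _ _) with hmdef
  have hsplit : rootVec x Q m (j + 1)
      = rootVec x Q m j * x j
        - (∏ p ∈ Finset.Ico m j, Q p j) • (x j * rootVec x Q m j) := by
    have := rootVec_snoc n Q x hS2 (j - m - 1) m (by omega) (by omega)
    rw [show m + (j - m - 1) + 2 = j + 1 from by omega,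
      show m + (j - m - 1) + 1 = j from by omega] at this
    exact this
  have hcomm : x j * pairProd (rootVec x Q) (i :: S.sort (· ≤ ·))
      = (∏ p ∈ Finset.Ico i m, Q j p) •
          (pairProd (rootVec x Q) (i :: S.sort (· ≤ ·)) * x j) := by
    apply xcomm_chain n Q x hS2 j hjn _ i hch hi
    intro b hb
    rcases List.mem_cons.1 hb with h | h
    · omega
    · exact (hmem b h).2
  have hscal : q * (∏ p ∈ Finset.Ico i j, Q j p) * (∏ p ∈ Finset.Ico m j, Q p j)
      = ∏ p ∈ Finset.Ico i m, Q j p := by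
    rw [← Finset.prod_Ico_consecutive (fun p => Q j p) him hmj.le]
    have h3 : (∏ p ∈ Finset.Ico m j, Q j p) * ∏ p ∈ Finset.Ico m j, Q p j = q⁻¹ := by
      rw [← Finset.prod_mul_distrib]
      exact prod_QQ n q Q hQ1 hQ2 m j (by omega) hmj hjn
    calc q * ((∏ p ∈ Finset.Ico i m, Q j p) * ∏ p ∈ Finset.Ico m j, Q j p) *
          (∏ p ∈ Finset.Ico m j, Q p j)
        = (∏ p ∈ Finset.Ico i m, Q j p) *
            (q * ((∏ p ∈ Finset.Ico m j, Q j p) * ∏ p ∈ Finset.Ico m j, Q p j)) := by ring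
      _ = (∏ p ∈ Finset.Ico i m, Q j p) * (q * q⁻¹) := by rw [h3]
      _ = _ := by rw [mul_inv_cancel₀ hq0, mul_one]
  rw [show chainList i j S = (i :: S.sort (· ≤ ·)) ++ [j] from rfl,
    show chainList i (j + 1) S = (i :: S.sort (· ≤ ·)) ++ [j + 1] from rfl,
    pairProd_snoc, pairProd_snoc, ← hmdef, hsplit,
    mul_assoc (pairProd (rootVec x Q) (i :: S.sort (· ≤ ·))) (rootVec x Q m j) (x j),
    mul_sub, sub_sub_cancel, mul_smul_comm, smul_smul, hscal,
    ← mul_assoc (pairProd (rootVec x Q) (i :: S.sort (· ≤ ·))) (x j) (rootVec x Q m j),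
    ← smul_mul_assoc, ← hcomm, mul_assoc]

end FieldPart

lemma revRootVec_base {k A : Type*} [CommRing k] [Ring A] [Algebra k A]
    (x : ℕ → A) (Q : ℕ → ℕ → k) {j i : ℕ} (h : j ≤ i + 1) :
    revRootVec x Q j i = x i := by
  rw [revRootVec, if_pos h]

lemma revRootVec_step {k A : Type*} [CommRing k] [Ring A] [Algebra k A]
    (x : ℕ → A) (Q : ℕ → ℕ → k) {j i : ℕ} (h : i + 1 < j) :
    revRootVec x Q j i = x (j - 1) * revRootVec x Q (j - 1) i
      - (∏ p ∈ Finset.Ico i (j - 1), Q (j - 1) p) • (revRootVec x Q (j - 1) i * x (j - 1)) := by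
  rw [revRootVec, if_neg (by omega)]

lemma pairProd_single {M : Type*} [Monoid M] (f : ℕ → ℕ → M) (a : ℕ) :
    pairProd f [a] = 1 := rfl

lemma pairProd_concat_two {M : Type*} [Monoid M] (f : ℕ → ℕ → M) :
    ∀ (L : List ℕ) (a b c : ℕ),
      pairProd f ((a :: L) ++ [b, c]) = pairProd f ((a :: L) ++ [b]) * f b c := by
  intro L
  induction L with
  | nil => intro a b c; simp [pairProd_cons₂, pairProd_single, pairProd, mul_assoc]
  | cons d L ih =>
      intro a b c
      simp only [List.cons_append, pairProd_cons₂]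
      rw [← List.cons_append, ← List.cons_append, ih d b c]
      simp [List.cons_append, pairProd_cons₂, mul_assoc]


end Helpers

/-- In the braided Hopf algebra `R(𝒟)` of type `A_n` (generators
`x_1, …, x_n`, quantum Serre relations, braiding matrix of Cartan type `A_n`), the
reverse root vector satisfies, for all `1 ≤ i < j ≤ n+1`,
`x_{ji} = (-q)^{j-i-1} (∏_{i ≤ k < l < j} q_{lk})
           ∑_{(i_1,…,i_r) ∈ I_{ij}} (q⁻¹-1)^{r-2} x_{i_1 i_2} ⋯ x_{i_{r-1} i_r}`.
(The statement holds in any algebra whose elements `x_1, …, x_n` satisfy the quantum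
Serre relations, in particular in `R(𝒟)`.) -/
theorem stmt_9 {k A : Type*} [Field k] [Ring A] [Algebra k A]
    (n N : ℕ) (hn : 2 ≤ n) (hNodd : Odd N) (hN1 : 1 < N)
    (q : k) (hq : IsPrimitiveRoot q N) (Q : ℕ → ℕ → k)
    (hQdiag : ∀ l, 1 ≤ l → l ≤ n → Q l l = q)
    (hQ1 : ∀ a b, 1 ≤ a → a ≤ n → 1 ≤ b → b ≤ n → (a + 1 = b ∨ b + 1 = a) →
      Q a b * Q b a = q⁻¹)
    (hQ2 : ∀ a b, 1 ≤ a → a ≤ n → 1 ≤ b → b ≤ n → (a + 2 ≤ b ∨ b + 2 ≤ a) →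
      Q a b * Q b a = 1)
    (x : ℕ → A)
    (hSerre1 : ∀ a b, 1 ≤ a → a ≤ n → 1 ≤ b → b ≤ n → (a + 1 = b ∨ b + 1 = a) →
      x a * (x a * x b - Q a b • (x b * x a))
        - (Q a a * Q a b) • ((x a * x b - Q a b • (x b * x a)) * x a) = 0)
    (hSerre2 : ∀ a b, 1 ≤ a → a ≤ n → 1 ≤ b → b ≤ n → (a + 2 ≤ b ∨ b + 2 ≤ a) →
      x a * x b - Q a b • (x b * x a) = 0)
    (i j : ℕ) (hi : 1 ≤ i) (hij : i < j) (hj : j ≤ n + 1) :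
    revRootVec x Q j i
      = ∑ S ∈ (Finset.Ioo i j).powerset,
          ((-q) ^ (j - i - 1) * (∏ b ∈ Finset.Ioo i j, ∏ a ∈ Finset.Ico i b, Q b a) *
            (q⁻¹ - 1) ^ S.card) • pairProd (rootVec x Q) (chainList i j S) := by
  have hq0 : q ≠ 0 := by
    intro h0
    have h1 := hq.pow_eq_one
    rw [h0, zero_pow (show N ≠ 0 from by omega)] at h1
    exact zero_ne_one h1
  have hij' : i + 1 ≤ j := hij
  clear hij
  revert hj
  induction j, hij' using Nat.le_induction with
  | base =>
      intro hj
      rw [revRootVec_base x Q (le_refl _),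
        show Finset.Ioo i (i + 1) = ∅ from by ext p; simp,
        Finset.powerset_empty, Finset.sum_singleton,
        show i + 1 - i - 1 = 0 from by omega]
      simp [chainList, pairProd_cons₂, pairProd_single, rootVec_base x Q (le_refl (i + 1))]
  | succ j hij ih =>
      intro hj1
      have hjn : j ≤ n := by omega
      have hjnm : j ∉ Finset.Ioo i j := by simp
      rw [revRootVec_step x Q (show i + 1 < j + 1 from by omega)]
      simp only [Nat.add_sub_cancel]
      rw [ih (by omega)]
      rw [Finset.mul_sum, Finset.sum_mul, Finset.smul_sum]
      simp only [mul_smul_comm, smul_mul_assoc, smul_smul]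
      rw [← Finset.sum_sub_distrib]
      rw [show Finset.Ioo i (j + 1) = insert j (Finset.Ioo i j) from by ext p; simp; omega]
      rw [Finset.sum_powerset_insert hjnm]
      simp only [Finset.prod_insert hjnm,
        show j + 1 - i - 1 = (j - i - 1) + 1 from by omega, pow_succ]
      rw [← Finset.sum_add_distrib]
      apply Finset.sum_congr rfl
      intro S hS
      have hSsub : S ⊆ Finset.Ioo i j := Finset.mem_powerset.1 hS
      have hjS : j ∉ S := fun h => hjnm (hSsub h)
      have hSlt : ∀ a ∈ S, a < j := fun a ha => (Finset.mem_Ioo.1 (hSsub ha)).2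
      have hcard : (insert j S).card = S.card + 1 := Finset.card_insert_of_notMem hjS
      have hpp : pairProd (rootVec x Q) (chainList i (j + 1) (insert j S))
          = pairProd (rootVec x Q) (chainList i j S) * x j := by
        have hclins : chainList i (j + 1) (insert j S)
            = (i :: S.sort (· ≤ ·)) ++ [j, j + 1] := by
          show i :: ((insert j S).sort (· ≤ ·) ++ [j + 1]) = _
          rw [sort_insert_max hSlt]
          simp
        rw [hclins, pairProd_concat_two,
          show (i :: S.sort (· ≤ ·)) ++ [j] = chainList i j S from rfl,
          rootVec_base x Q (le_refl (j + 1))]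
      have hKey := chainKey n q hq0 Q x hQ1 hQ2 hSerre2 i j S hi (by omega) hjn hSsub
      rw [hKey, hpp, hcard, pow_succ]
      simp only [smul_sub, smul_smul]
      match_scalars <;> field_simp <;> ring
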